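/- Let r ∈ ℝ, σ > 0, τ > 0, S > 0, λ₁ > 0, h > 0, and set ν := r − σ²/2. For k ∈ ℝ define d(k, S') := (k − ln S' − ν·τ)/(σ·√τ) and ℓ(k) := h − (h + e^{rτ})/Φ(d(k, S)). Then lim_{k → −∞} e^{−rτ}·( ℓ(k)·Φ(d(k, S·e^{λ₁τ})) + h·(1 − Φ(d(k, S·e^{λ₁τ}))) ) = e^{−rτ}·h. -/

import Mathlib

open MeasureTheory ProbabilityTheory Real Filter Set

/-- Cumulative distribution function of the standard normal distribution. -/
noncomputable def stdNormalCDF : ℝ → ℝ :=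
  fun x => ProbabilityTheory.cdf (ProbabilityTheory.gaussianReal 0 1) x

lemma stdNormalCDF_eq (x : ℝ) :
    stdNormalCDF x = ∫ t in Iic x, gaussianPDFReal 0 1 t := by
  rw [stdNormalCDF, cdf_eq_real, measureReal_def, gaussianReal_apply_eq_integral 0 one_ne_zero,
    ENNReal.toReal_ofReal (integral_nonneg fun t => gaussianPDFReal_nonneg 0 1 t)]

lemma stdNormalCDF_shift_le (c x : ℝ) (hc : 0 ≤ c) :
    stdNormalCDF (x - c) ≤ Real.exp (c*x - c^2/2) * stdNormalCDF x := by
  rw [stdNormalCDF_eq, stdNormalCDF_eq]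
  have h1 : ∫ t in Iic (x - c), gaussianPDFReal 0 1 t
      = ∫ t in Iic x, gaussianPDFReal 0 1 (t - c) := by
    rw [← integral_indicator measurableSet_Iic, ← integral_indicator measurableSet_Iic,
      ← integral_sub_right_eq_self (fun t => (Iic (x-c)).indicator (gaussianPDFReal 0 1) t) c]
    congr 1
    ext t
    by_cases ht : t ≤ x
    · rw [Set.indicator_of_mem (by simpa using ht),
        Set.indicator_of_mem (by simp only [mem_Iic]; linarith)]
    · rw [Set.indicator_of_notMem (by simpa using ht),
        Set.indicator_of_notMem (by simp only [mem_Iic]; intro hcon; exact ht (by linarith))]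
  rw [h1, ← integral_const_mul]
  apply setIntegral_mono_on
  · exact ((integrable_gaussianPDFReal 0 1).comp_sub_right c).integrableOn
  · exact ((integrable_gaussianPDFReal 0 1).const_mul _).integrableOn
  · exact measurableSet_Iic
  · intro t ht
    simp only [mem_Iic] at ht
    simp only [gaussianPDFReal, NNReal.coe_one, sub_zero, mul_one]
    rw [mul_left_comm, ← Real.exp_add]
    gcongr
    nlinarith [mul_le_mul_of_nonneg_left ht hc]

lemma stdNormalCDF_pos (x : ℝ) : 0 < stdNormalCDF x := by
  rw [stdNormalCDF_eq]
  rw [setIntegral_pos_iff_support_of_nonneg_ae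
    (ae_of_all _ fun t => gaussianPDFReal_nonneg 0 1 t)
    (integrable_gaussianPDFReal 0 1).integrableOn]
  have hs : Function.support (gaussianPDFReal 0 1) = Set.univ := by
    ext t; simp [Function.mem_support, (gaussianPDFReal_pos 0 1 t one_ne_zero).ne']
  rw [hs, Set.univ_inter]
  simp [Real.volume_Iic]

lemma ratio_tendsto (c : ℝ) (hc : 0 < c) :
    Tendsto (fun x => stdNormalCDF (x - c) / stdNormalCDF x) atBot (nhds 0) := by
  have hexp : Tendsto (fun x : ℝ => Real.exp (c*x - c^2/2)) atBot (nhds 0) := by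
    apply Real.tendsto_exp_atBot.comp
    apply tendsto_atBot_add_const_right
    exact (tendsto_const_mul_atBot_of_pos hc).mpr tendsto_id
  apply tendsto_of_tendsto_of_tendsto_of_le_of_le tendsto_const_nhds hexp
  · intro x
    exact div_nonneg (stdNormalCDF_pos _).le (stdNormalCDF_pos _).le
  · intro x
    rw [div_le_iff₀ (stdNormalCDF_pos x)]
    exact stdNormalCDF_shift_le c x hc.le

/-- As the strike `k → -∞`, the Black–Scholes price, at the up-shifted spot
`S·e^{λ₁τ}`, of the budget-constrained digital option paying `h` above `e^k` and
`ℓ(k)` below, tends to `e^{-rτ}·h`. -/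
theorem digital_price_up_shifted_spot_limit
    (r σ τ S lam₁ h : ℝ) (hσ : 0 < σ) (hτ : 0 < τ) (hS : 0 < S)
    (hlam : 0 < lam₁) (hh : 0 < h)
    (ν : ℝ) (hν : ν = r - σ^2/2)
    (d : ℝ → ℝ → ℝ) (hd : ∀ k S', d k S' = (k - Real.log S' - ν*τ) / (σ * Real.sqrt τ))
    (l : ℝ → ℝ) (hl : ∀ k, l k = h - (h + Real.exp (r*τ)) / stdNormalCDF (d k S)) :
    Filter.Tendsto
      (fun k : ℝ => Real.exp (-(r*τ)) *
        (l k * stdNormalCDF (d k (S * Real.exp (lam₁*τ)))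
          + h * (1 - stdNormalCDF (d k (S * Real.exp (lam₁*τ))))))
      Filter.atBot (nhds (Real.exp (-(r*τ)) * h)) := by
  have hsτ : 0 < σ * Real.sqrt τ := mul_pos hσ (Real.sqrt_pos.mpr hτ)
  set c : ℝ := lam₁ * τ / (σ * Real.sqrt τ) with hc_def
  have hc : 0 < c := div_pos (mul_pos hlam hτ) hsτ
  set A : ℝ → ℝ := fun k => (k - Real.log S - ν*τ) / (σ * Real.sqrt τ) with hA_def
  have hAk : ∀ k, d k S = A k := fun k => hd k S
  have hBk : ∀ k, d k (S * Real.exp (lam₁*τ)) = A k - c := by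
    intro k
    rw [hd, Real.log_mul hS.ne' (Real.exp_ne_zero _), Real.log_exp]
    ring
  have hA_tendsto : Tendsto A atBot atBot := by
    have : Tendsto (fun k : ℝ => k - Real.log S - ν*τ) atBot atBot := by
      apply tendsto_atBot_add_const_right
      exact tendsto_atBot_add_const_right _ _ tendsto_id
    exact this.atBot_div_const hsτ
  have hratio : Tendsto (fun k => stdNormalCDF (A k - c) / stdNormalCDF (A k)) atBot (nhds 0) :=
    (ratio_tendsto c hc).comp hA_tendsto
  have heq : ∀ k, Real.exp (-(r*τ)) *
        (l k * stdNormalCDF (d k (S * Real.exp (lam₁*τ)))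
          + h * (1 - stdNormalCDF (d k (S * Real.exp (lam₁*τ)))))
      = Real.exp (-(r*τ)) * h - (Real.exp (-(r*τ)) * (h + Real.exp (r*τ)))
          * (stdNormalCDF (A k - c) / stdNormalCDF (A k)) := by
    intro k
    rw [hl, hAk, hBk]
    have hpos := (stdNormalCDF_pos (A k)).ne'
    field_simp
    ring
  simp only [heq]
  have := hratio.const_mul (Real.exp (-(r*τ)) * (h + Real.exp (r*τ)))
  have final := (tendsto_const_nhds (x := Real.exp (-(r*τ)) * h) (f := atBot)).sub this
  simpa using final
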